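/- Let M be the 10×18 matrix over 𝔽₃₇ whose rows are: (33,14,34,34,33,11,0,0,0,0,0,0,0,0,0,0,0,0), (0,0,0,0,0,0,9,3,23,28,10,26,0,0,0,0,0,0), (0,0,0,0,0,0,0,0,0,0,0,0,1,2,2,1,2,1), (19,22,6,20,21,18,2,14,24,6,10,35,10,33,9,30,13,27), (29,14,35,17,11,23,19,13,14,29,34,24,31,29,17,22,36,8), (11,21,11,26,29,12,10,9,10,27,23,21,4,11,4,33,24,1), (26,3,24,4,27,34,35,14,1,31,15,23,36,7,19,34,26,30), (21,0,0,0,0,0,22,0,0,0,0,0,29,0,0,0,0,0), (4,35,33,28,1,1,21,8,16,36,33,33,32,21,5,2,8,8), (8,1,34,22,16,13,1,14,32,12,2,34,7,24,2,10,14,16). Then the left kernel {Λ ∈ 𝔽₃₇^{10} : Λ·M = 0} is a one-dimensional 𝔽₃₇-subspace, spanned by the vector (1,21,13,32,8,33,17,3,19,18). -/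
import Mathlib


/-- The `10 × 18` matrix over `𝔽₃₇` encoding the linear system `Λ · M = 0` for the
unknown scalars `Λ = (λ₁, …, λ₁₀)`. -/
def M : Matrix (Fin 10) (Fin 18) (ZMod 37) :=
  !![33,14,34,34,33,11,0,0,0,0,0,0,0,0,0,0,0,0;
     0,0,0,0,0,0,9,3,23,28,10,26,0,0,0,0,0,0;
     0,0,0,0,0,0,0,0,0,0,0,0,1,2,2,1,2,1;
     19,22,6,20,21,18,2,14,24,6,10,35,10,33,9,30,13,27;
     29,14,35,17,11,23,19,13,14,29,34,24,31,29,17,22,36,8;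
     11,21,11,26,29,12,10,9,10,27,23,21,4,11,4,33,24,1;
     26,3,24,4,27,34,35,14,1,31,15,23,36,7,19,34,26,30;
     21,0,0,0,0,0,22,0,0,0,0,0,29,0,0,0,0,0;
     4,35,33,28,1,1,21,8,16,36,33,33,32,21,5,2,8,8;
     8,1,34,22,16,13,1,14,32,12,2,34,7,24,2,10,14,16]

/-- Spanning vector of the left kernel. -/
def V : Fin 10 → ZMod 37 := ![1, 21, 13, 32, 8, 33, 17, 3, 19, 18]

/-- Certificate matrix: `M * C = 1 - (e₀)ᵀ · V`. -/
def C : Matrix (Fin 18) (Fin 10) (ZMod 37) :=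
  !![0,21,8,2,5,1,25,36,17,9;
     0,31,31,15,31,32,5,27,4,1;
     0,31,15,9,8,29,27,34,23,8;
     0,33,34,19,12,8,16,25,23,21;
     0,4,32,6,25,13,26,15,7,32;
     0,2,31,2,30,32,19,0,1,30;
     0,22,23,25,7,31,35,1,9,20;
     0,33,5,36,16,18,6,34,10,14;
     0,0,0,0,0,0,0,0,0,0;
     0,0,0,0,0,0,0,0,0,0;
     0,0,0,0,0,0,0,0,0,0;
     0,0,0,0,0,0,0,0,0,0;
     0,0,1,0,0,0,0,0,0,0;
     0,0,0,0,0,0,0,0,0,0;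
     0,0,0,0,0,0,0,0,0,0;
     0,0,0,0,0,0,0,0,0,0;
     0,0,0,0,0,0,0,0,0,0;
     0,0,0,0,0,0,0,0,0,0]

lemma hMC : M * C = 1 - Matrix.vecMulVec (fun i => if i = 0 then 1 else 0) V := by
  decide

lemma hVker : Matrix.vecMul V M = 0 := by decide

lemma key (Λ : Fin 10 → ZMod 37) (h : Matrix.vecMul Λ M = 0) : Λ = Λ 0 • V := by
  have h2 : Matrix.vecMul Λ (M * C) = 0 := by
    rw [← Matrix.vecMul_vecMul, h, Matrix.zero_vecMul]
  rw [hMC] at h2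
  have h3 : Matrix.vecMul Λ (Matrix.vecMulVec (fun i => if i = 0 then 1 else 0) V)
      = Λ 0 • V := by
    funext j
    simp only [Matrix.vecMul, Matrix.vecMulVec, dotProduct, Matrix.of_apply,
      Pi.smul_apply, smul_eq_mul]
    rw [show (∑ i, Λ i * ((if i = 0 then (1:ZMod 37) else 0) * V j))
        = ∑ i, (if i = 0 then Λ i * V j else 0) by
      apply Finset.sum_congr rfl; intro i _; split <;> simp [mul_comm, mul_assoc, mul_left_comm]]
    simp
  rw [Matrix.vecMul_sub, Matrix.vecMul_one, h3, sub_eq_zero] at h2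
  exact h2

set_option maxHeartbeats 1000000 in
theorem left_kernel_spanned :
    Module.finrank (ZMod 37) (LinearMap.ker (Matrix.vecMulLinear M)) = 1 ∧
    LinearMap.ker (Matrix.vecMulLinear M) =
      Submodule.span (ZMod 37)
        {![1, 21, 13, 32, 8, 33, 17, 3, 19, 18]} := by
  have hker : LinearMap.ker (Matrix.vecMulLinear M) =
      Submodule.span (ZMod 37) {![1, 21, 13, 32, 8, 33, 17, 3, 19, 18]} := by
    apply le_antisymm
    · intro Λ hΛ
      rw [LinearMap.mem_ker, Matrix.vecMulLinear_apply] at hΛ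
      rw [Submodule.mem_span_singleton]
      exact ⟨Λ 0, (key Λ hΛ).symm⟩
    · rw [Submodule.span_le, Set.singleton_subset_iff]
      rw [SetLike.mem_coe, LinearMap.mem_ker, Matrix.vecMulLinear_apply]
      exact hVker
  refine ⟨?_, hker⟩
  rw [hker]
  have hv : (![1, 21, 13, 32, 8, 33, 17, 3, 19, 18] : Fin 10 → ZMod 37) ≠ 0 := by
    intro h
    have h0 : (1 : ZMod 37) = 0 := congrFun h 0
    exact absurd h0 (by decide)
  haveI : Fact (Nat.Prime 37) := ⟨by norm_num⟩
  exact finrank_span_singleton hv
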